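/- Let n = 4 and let σ_{ij} = σ_{ji} (i ≠ j) be nonpositive reals; with λ_k, μ_k, R as in Proposition 4.2 one has ∑_{i<j}(λ_i+λ_j)²σ_{ij} = (σ_{12}-σ_{34})²(σ_{12}+σ_{34}) + (σ_{13}-σ_{24})²(σ_{13}+σ_{24}) + (σ_{14}-σ_{23})²(σ_{14}+σ_{23}). Consequently, if this quantity is zero and all σ_{ij} ≤ 0, then σ_{12}=σ_{34}, σ_{13}=σ_{24}, σ_{14}=σ_{23}, and hence all λ_k = 0. -/
import Mathlib
open Finset

lemma dim4_aux (a b : ℝ) (ha : a ≤ 0) (hb : b ≤ 0) (h : (a - b)^2 * (a + b) = 0) : a = b := by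
  rcases mul_eq_zero.mp h with h | h
  · have : a - b = 0 := by
      have := sq_eq_zero_iff.mp h
      exact this
    linarith
  · linarith

theorem dim4_opposite_curvatures (σ : Fin 4 → Fin 4 → ℝ)
    (hsymm : ∀ i j, σ i j = σ j i)
    (hnonpos : ∀ i j, i ≠ j → σ i j ≤ 0)
    (μ : Fin 4 → ℝ) (hμ : ∀ k, μ k = ∑ i ∈ univ.filter (· ≠ k), σ i k)
    (R : ℝ) (hR : R = ∑ k, μ k)
    (lam : Fin 4 → ℝ) (hlam : ∀ k, lam k = μ k - R / 4) :
    (∑ i, ∑ j ∈ univ.filter (fun j => i < j), (lam i + lam j) ^ 2 * σ i j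
      = (σ 0 1 - σ 2 3) ^ 2 * (σ 0 1 + σ 2 3)
        + (σ 0 2 - σ 1 3) ^ 2 * (σ 0 2 + σ 1 3)
        + (σ 0 3 - σ 1 2) ^ 2 * (σ 0 3 + σ 1 2))
    ∧ ((∑ i, ∑ j ∈ univ.filter (fun j => i < j), (lam i + lam j) ^ 2 * σ i j = 0) →
        σ 0 1 = σ 2 3 ∧ σ 0 2 = σ 1 3 ∧ σ 0 3 = σ 1 2 ∧ ∀ k, lam k = 0) := by
  have hμ0 := hμ 0; have hμ1 := hμ 1; have hμ2 := hμ 2; have hμ3 := hμ 3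
  simp [Fin.sum_univ_four, Finset.sum_filter] at hμ0 hμ1 hμ2 hμ3
  rw [Fin.sum_univ_four] at hR
  have hl0 := hlam 0; have hl1 := hlam 1; have hl2 := hlam 2; have hl3 := hlam 3
  have h01 := hsymm 0 1; have h02 := hsymm 0 2; have h03 := hsymm 0 3
  have h12 := hsymm 1 2; have h13 := hsymm 1 3; have h23 := hsymm 2 3
  have key : ∑ i, ∑ j ∈ univ.filter (fun j => i < j), (lam i + lam j) ^ 2 * σ i j
      = (σ 0 1 - σ 2 3) ^ 2 * (σ 0 1 + σ 2 3)
        + (σ 0 2 - σ 1 3) ^ 2 * (σ 0 2 + σ 1 3)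
        + (σ 0 3 - σ 1 2) ^ 2 * (σ 0 3 + σ 1 2) := by
    have expand : ∑ i, ∑ j ∈ univ.filter (fun j => i < j), (lam i + lam j) ^ 2 * σ i j
        = (lam 0 + lam 1)^2 * σ 0 1 + (lam 0 + lam 2)^2 * σ 0 2 + (lam 0 + lam 3)^2 * σ 0 3
          + (lam 1 + lam 2)^2 * σ 1 2 + (lam 1 + lam 3)^2 * σ 1 3 + (lam 2 + lam 3)^2 * σ 2 3 := by
      simp [Fin.sum_univ_four, Finset.sum_filter]; ring
    rw [expand, hl0, hl1, hl2, hl3, hμ0, hμ1, hμ2, hμ3, hR, hμ0, hμ1, hμ2, hμ3,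
      h01, h02, h03, h12, h13, h23]
    ring
  refine ⟨key, fun hz => ?_⟩
  rw [key] at hz
  have n01 := hnonpos 0 1 (by decide); have n02 := hnonpos 0 2 (by decide)
  have n03 := hnonpos 0 3 (by decide); have n12 := hnonpos 1 2 (by decide)
  have n13 := hnonpos 1 3 (by decide); have n23 := hnonpos 2 3 (by decide)
  have t1 : (σ 0 1 - σ 2 3) ^ 2 * (σ 0 1 + σ 2 3) ≤ 0 :=
    mul_nonpos_of_nonneg_of_nonpos (sq_nonneg _) (by linarith)
  have t2 : (σ 0 2 - σ 1 3) ^ 2 * (σ 0 2 + σ 1 3) ≤ 0 :=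
    mul_nonpos_of_nonneg_of_nonpos (sq_nonneg _) (by linarith)
  have t3 : (σ 0 3 - σ 1 2) ^ 2 * (σ 0 3 + σ 1 2) ≤ 0 :=
    mul_nonpos_of_nonneg_of_nonpos (sq_nonneg _) (by linarith)
  have e1 : σ 0 1 = σ 2 3 := dim4_aux _ _ n01 n23 (by linarith)
  have e2 : σ 0 2 = σ 1 3 := dim4_aux _ _ n02 n13 (by linarith)
  have e3 : σ 0 3 = σ 1 2 := dim4_aux _ _ n03 n12 (by linarith)
  refine ⟨e1, e2, e3, fun k => ?_⟩
  have hRv : R = 2 * (σ 0 1 + σ 0 2 + σ 0 3 + σ 1 2 + σ 1 3 + σ 2 3) := by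
    rw [hR, hμ0, hμ1, hμ2, hμ3, ← h01, ← h02, ← h03, ← h12, ← h13, ← h23]; ring
  fin_cases k
  · show lam 0 = 0
    rw [hl0, hμ0, ← h01, ← h02, ← h03, hRv]; linarith
  · show lam 1 = 0
    rw [hl1, hμ1, h01, ← h12, ← h13, hRv]; linarith
  · show lam 2 = 0
    rw [hl2, hμ2, h02, h12, ← h23, hRv]; linarith
  · show lam 3 = 0
    rw [hl3, hμ3, h03, h13, h23, hRv]; linarith
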